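/- For every configuration ω ∈ Ω, if the vertex set V(T_{(1,1)}^ω) is infinite, then there exists an infinite sequence (z_n)_{n≥0} of sites with z_0 = (0,0) and z_{n+1} − z_n ∈ {(1,0),(0,1)} for all n, such that z_n = (1,1) for some n and for every n the initial segment (z_0,…,z_n) equals the low-optimal path γ_{z_n}^ω; in particular this infinite low-optimal path is non trivial, i.e. it coincides with neither of the two axes ℤ₊(1,0) and ℤ₊(0,1). -/

import Mathlib

open scoped NNReal

/-- A site of the lattice `ℤ²`. -/
abbrev Site : Type := ℤ × ℤ

/-- The positive quadrant `ℤ₊²`. -/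
def posQuad : Set Site := {z : Site | 0 ≤ z.1 ∧ 0 ≤ z.2}

/-- An admissible (up-right) step. -/
def IsStep (u v : Site) : Prop := v = u + (1, 0) ∨ v = u + (0, 1)

/-- `γ` is an up-right path from `(0,0)` to `z`, i.e. `γ ∈ Γ_z`. -/
def IsPathTo (z : Site) (γ : List Site) : Prop :=
  γ.head? = some ((0, 0) : Site) ∧ γ.getLast? = some z ∧ γ.Chain' IsStep

/-- The length `ω(γ) = Σ_{z ∈ γ} ω(z)` of a path `γ` under the configuration `ω`. -/
noncomputable def plen (ω : Site → ℝ) (γ : List Site) : ℝ := (γ.map ω).sum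

lemma isStep_iff {u v : Site} :
    IsStep u v ↔ v.1 + v.2 = u.1 + u.2 + 1 ∧ u.2 ≤ v.2 ∧ v.2 ≤ u.2 + 1 := by
  constructor
  · rintro (rfl | rfl) <;> simp [Prod.ext_iff] <;> omega
  · rintro ⟨h1, h2, h3⟩
    rcases (by omega : v.2 = u.2 ∨ v.2 = u.2 + 1) with h | h
    · left; rw [Prod.ext_iff]; constructor <;> simp <;> omega
    · right; rw [Prod.ext_iff]; constructor <;> simp <;> omega

lemma path_ne_nil {z : Site} {γ : List Site} (h : IsPathTo z γ) : γ ≠ [] := by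
  rintro rfl; simp [IsPathTo] at h

lemma path_length_pos {z : Site} {γ : List Site} (h : IsPathTo z γ) : 0 < γ.length :=
  List.length_pos_iff.2 (path_ne_nil h)

lemma path_zero {z : Site} {γ : List Site} (h : IsPathTo z γ) (h0 : 0 < γ.length) :
    γ[0] = ((0, 0) : Site) := by
  cases γ with
  | nil => simp at h0
  | cons a l =>
    have := h.1
    simp only [List.head?_cons, Option.some_inj] at this
    simpa using this

lemma path_step {z : Site} {γ : List Site} (h : IsPathTo z γ) {i : ℕ}
    (hi : i + 1 < γ.length) : IsStep γ[i] γ[i + 1] := by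
  have := List.isChain_iff_getElem.1 h.2.2 i (by omega)
  simpa [List.get_eq_getElem] using this

lemma path_coords {z : Site} {γ : List Site} (h : IsPathTo z γ) :
    ∀ i, (hi : i < γ.length) →
      γ[i].1 + γ[i].2 = (i : ℤ) ∧ 0 ≤ γ[i].2 ∧ γ[i].2 ≤ (i : ℤ) := by
  intro i
  induction i with
  | zero =>
    intro hi
    rw [path_zero h hi]
    simp
  | succ i ih =>
    intro hi
    have h1 := ih (by omega)
    have h2 := isStep_iff.1 (path_step h hi)
    push_cast
    push_cast at h1
    omega

lemma path_last {z : Site} {γ : List Site} (h : IsPathTo z γ) :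
    γ[γ.length - 1]'(by have := path_length_pos h; omega) = z := by
  have h2 := h.2.1
  rw [List.getLast?_eq_getElem?] at h2
  rw [List.getElem?_eq_getElem (show γ.length - 1 < γ.length by
    have := path_length_pos h; omega)] at h2
  simpa using h2

lemma path_length {z : Site} {γ : List Site} (h : IsPathTo z γ) :
    (γ.length : ℤ) = z.1 + z.2 + 1 := by
  have hpos := path_length_pos h
  have hc := (path_coords h (γ.length - 1) (by omega)).1
  rw [path_last h] at hc
  omega

lemma path_target_posQuad {z : Site} {γ : List Site} (h : IsPathTo z γ) : z ∈ posQuad := by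
  have hpos := path_length_pos h
  have hc := path_coords h (γ.length - 1) (by omega)
  rw [path_last h] at hc
  exact ⟨by omega, hc.2.1⟩

lemma path_getElem_posQuad {z : Site} {γ : List Site} (h : IsPathTo z γ) {i : ℕ}
    (hi : i < γ.length) : γ[i] ∈ posQuad := by
  have hc := path_coords h i hi
  exact ⟨by omega, hc.2.1⟩

lemma path_eq {z : Site} {γ γ' : List Site} (h : IsPathTo z γ) (h' : IsPathTo z γ')
    (hy : ∀ i, (hi : i < γ.length) → (hi' : i < γ'.length) → γ[i].2 = γ'[i].2) :
    γ = γ' := by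
  have hl : γ.length = γ'.length := by
    have := path_length h; have := path_length h'; omega
  apply List.ext_getElem hl
  intro i hi hi'
  have e1 := (path_coords h i hi).1
  have e2 := (path_coords h' i hi').1
  have e3 := hy i hi hi'
  rw [Prod.ext_iff]
  omega

lemma path_snoc {z w : Site} {γ : List Site} (h : IsPathTo z γ) (hs : IsStep z w) :
    IsPathTo w (γ ++ [w]) := by
  obtain ⟨h1, h2, h3⟩ := h
  refine ⟨?_, ?_, ?_⟩
  · cases γ with
    | nil => simp at h1
    | cons a l => simpa using h1
  · exact List.getLast?_concat
  · refine List.IsChain.append h3 (List.isChain_singleton _) ?_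
    intro x hx y hy
    rw [h2] at hx
    simp only [Option.mem_def, Option.some_inj, List.head?_cons] at hx hy
    subst hx; subst hy; exact hs

lemma path_exists_aux : ∀ n : ℕ, ∀ z : Site, z ∈ posQuad → (z.1 + z.2).toNat = n →
    ∃ γ, IsPathTo z γ := by
  intro n
  induction n with
  | zero =>
    intro z hz h0
    obtain ⟨h1, h2⟩ := hz
    have : z = ((0, 0) : Site) := by rw [Prod.ext_iff]; constructor <;> omega
    subst this
    exact ⟨[(0, 0)], rfl, rfl, List.isChain_singleton _⟩
  | succ n ih =>
    intro z hz hn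
    obtain ⟨h1, h2⟩ := hz
    rcases (by omega : 0 < z.1 ∨ 0 < z.2) with hp | hp
    · obtain ⟨γ, hγ⟩ := ih (z.1 - 1, z.2) ⟨by omega, h2⟩ (by simp; omega)
      exact ⟨γ ++ [z], path_snoc hγ (Or.inl (by rw [Prod.ext_iff]; constructor <;> simp))⟩
    · obtain ⟨γ, hγ⟩ := ih (z.1, z.2 - 1) ⟨h1, by omega⟩ (by simp; omega)
      exact ⟨γ ++ [z], path_snoc hγ (Or.inr (by rw [Prod.ext_iff]; constructor <;> simp))⟩

lemma path_exists {z : Site} (hz : z ∈ posQuad) : ∃ γ, IsPathTo z γ :=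
  path_exists_aux (z.1 + z.2).toNat z hz rfl
lemma finite_fixed_length (B : Set Site) (hB : B.Finite) :
    ∀ m : ℕ, {l : List Site | l.length = m ∧ ∀ x ∈ l, x ∈ B}.Finite := by
  intro m
  induction m with
  | zero =>
    apply Set.Finite.subset (Set.finite_singleton ([] : List Site))
    intro l hl
    simp only [Set.mem_setOf_eq] at hl
    simp [List.length_eq_zero_iff.1 hl.1]
  | succ m ih =>
    apply Set.Finite.subset ((hB.prod ih).image (fun p : Site × List Site => p.1 :: p.2))
    rintro l ⟨hlen, hmem⟩
    cases l with
    | nil => simp at hlen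
    | cons a t =>
      refine ⟨(a, t), ⟨hmem a (by simp), ?_, fun x hx => hmem x (by simp [hx])⟩, rfl⟩
      simpa using hlen

lemma finite_paths (z : Site) : {γ : List Site | IsPathTo z γ}.Finite := by
  apply Set.Finite.subset (finite_fixed_length
    ((Set.Icc (0:ℤ) (z.1 + z.2)) ×ˢ (Set.Icc (0:ℤ) (z.1 + z.2)))
    ((Set.finite_Icc _ _).prod (Set.finite_Icc _ _)) ((z.1 + z.2).toNat + 1))
  intro γ hγ
  have hlen := path_length hγ
  have hpos := path_length_pos hγ
  constructor
  · omega
  · intro x hx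
    obtain ⟨i, hi, rfl⟩ := List.mem_iff_getElem.1 hx
    have hc := path_coords hγ i hi
    have : (i : ℤ) ≤ z.1 + z.2 := by omega
    exact ⟨⟨by omega, by omega⟩, ⟨hc.2.1, by omega⟩⟩

/-- `γ ∈ Γ_z` is `ω`-optimal if its length is maximal over `Γ_z`. -/
def IsOptimal (ω : Site → ℝ) (z : Site) (γ : List Site) : Prop :=
  IsPathTo z γ ∧ ∀ γ' : List Site, IsPathTo z γ' → plen ω γ' ≤ plen ω γ

lemma exists_optimal (ω : Site → ℝ) {z : Site} (hz : z ∈ posQuad) :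
    ∃ γ, IsOptimal ω z γ := by
  obtain ⟨γ0, hγ0⟩ := path_exists hz
  obtain ⟨γ, hγ, hmax⟩ := Set.exists_max_image {γ : List Site | IsPathTo z γ} (plen ω)
    (finite_paths z) ⟨γ0, hγ0⟩
  exact ⟨γ, hγ, hmax⟩
def pmin (γ γ' : List Site) : List Site :=
  List.zipWith (fun u v => if u.2 ≤ v.2 then u else v) γ γ'

def pmax (γ γ' : List Site) : List Site :=
  List.zipWith (fun u v => if u.2 ≤ v.2 then v else u) γ γ'

@[simp] lemma plen_nil (ω : Site → ℝ) : plen ω [] = 0 := by simp [plen]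

@[simp] lemma plen_cons (ω : Site → ℝ) (a : Site) (l : List Site) :
    plen ω (a :: l) = ω a + plen ω l := by simp [plen]

@[simp] lemma plen_append (ω : Site → ℝ) (l l' : List Site) :
    plen ω (l ++ l') = plen ω l + plen ω l' := by simp [plen]

lemma plen_pmin_add_pmax (ω : Site → ℝ) :
    ∀ l l' : List Site, l.length = l'.length →
      plen ω (pmin l l') + plen ω (pmax l l') = plen ω l + plen ω l' := by
  intro l
  induction l with
  | nil => intro l' h; cases l' <;> simp [pmin, pmax] at *
  | cons a t ih =>
    intro l' h
    cases l' with
    | nil => simp at h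
    | cons b t' =>
      have hih := ih t' (by simpa using h)
      simp only [pmin, pmax, List.zipWith_cons_cons, plen_cons] at *
      by_cases hc : a.2 ≤ b.2 <;> simp only [if_pos, if_neg, hc, if_true, if_false] <;> linarith

lemma pmin_length {γ γ' : List Site} (h : γ.length = γ'.length) :
    (pmin γ γ').length = γ.length := by simp [pmin, h]

lemma pmax_length {γ γ' : List Site} (h : γ.length = γ'.length) :
    (pmax γ γ').length = γ.length := by simp [pmax, h]

lemma paths_length_eq {z : Site} {γ γ' : List Site} (h : IsPathTo z γ) (h' : IsPathTo z γ') :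
    γ.length = γ'.length := by
  have := path_length h; have := path_length h'; omega

lemma pmin_isPathTo {z : Site} {γ γ' : List Site} (h : IsPathTo z γ) (h' : IsPathTo z γ') :
    IsPathTo z (pmin γ γ') := by
  have hlen := paths_length_eq h h'
  have hplen : (pmin γ γ').length = γ.length := pmin_length hlen
  have hpos := path_length_pos h
  refine ⟨?_, ?_, ?_⟩
  · rw [List.head?_eq_getElem?, List.getElem?_eq_getElem (by omega)]
    simp only [pmin, List.getElem_zipWith]
    rw [path_zero h hpos, path_zero h' (by omega)]
    simp
  · rw [List.getLast?_eq_getElem?, List.getElem?_eq_getElem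
      (by omega : (pmin γ γ').length - 1 < (pmin γ γ').length), Option.some_inj]
    simp only [pmin, List.getElem_zipWith]
    have e : (pmin γ γ').length - 1 = γ.length - 1 := by omega
    have e2 : (pmin γ γ').length - 1 = γ'.length - 1 := by omega
    have l1 := path_last h; have l2 := path_last h'
    simp only [pmin] at e e2
    simp only [← e] at l1
    simp only [← e2] at l2
    rw [l1, l2]
    simp
  · refine List.isChain_iff_getElem.2 ?_
    intro i hilt
    have hig : i + 1 < γ.length := by
      simp only [pmin, List.length_zipWith] at hilt; omega
    have hig' : i + 1 < γ'.length := by omega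
    have s1 := isStep_iff.1 (path_step h hig)
    have s2 := isStep_iff.1 (path_step h' hig')
    have c1 := path_coords h i (by omega)
    have c2 := path_coords h' i (by omega)
    have c1' := path_coords h (i+1) hig
    have c2' := path_coords h' (i+1) hig'
    rw [isStep_iff]
    simp only [pmin, List.getElem_zipWith]
    split_ifs <;> exact ⟨by omega, by omega, by omega⟩

lemma pmax_isPathTo {z : Site} {γ γ' : List Site} (h : IsPathTo z γ) (h' : IsPathTo z γ') :
    IsPathTo z (pmax γ γ') := by
  have hlen := paths_length_eq h h'
  have hplen : (pmax γ γ').length = γ.length := pmax_length hlen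
  have hpos := path_length_pos h
  refine ⟨?_, ?_, ?_⟩
  · rw [List.head?_eq_getElem?, List.getElem?_eq_getElem (by omega)]
    simp only [pmax, List.getElem_zipWith]
    rw [path_zero h hpos, path_zero h' (by omega)]
    simp
  · rw [List.getLast?_eq_getElem?, List.getElem?_eq_getElem
      (by omega : (pmax γ γ').length - 1 < (pmax γ γ').length), Option.some_inj]
    simp only [pmax, List.getElem_zipWith]
    have e : (pmax γ γ').length - 1 = γ.length - 1 := by omega
    have e2 : (pmax γ γ').length - 1 = γ'.length - 1 := by omega
    have l1 := path_last h; have l2 := path_last h'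
    simp only [pmax] at e e2
    simp only [← e] at l1
    simp only [← e2] at l2
    rw [l1, l2]
    simp
  · refine List.isChain_iff_getElem.2 ?_
    intro i hilt
    have hig : i + 1 < γ.length := by
      simp only [pmax, List.length_zipWith] at hilt; omega
    have hig' : i + 1 < γ'.length := by omega
    have s1 := isStep_iff.1 (path_step h hig)
    have s2 := isStep_iff.1 (path_step h' hig')
    have c1 := path_coords h i (by omega)
    have c2 := path_coords h' i (by omega)
    have c1' := path_coords h (i+1) hig
    have c2' := path_coords h' (i+1) hig'
    rw [isStep_iff]
    simp only [pmax, List.getElem_zipWith]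
    split_ifs <;> exact ⟨by omega, by omega, by omega⟩
/-- `γ` is below `γ'`: at every step index, the second coordinate of the site of `γ`
is at most that of the corresponding site of `γ'`. -/
def Below (γ γ' : List Site) : Prop :=
  ∀ (i : ℕ) (h : i < γ.length) (h' : i < γ'.length),
    (γ.get ⟨i, h⟩).2 ≤ (γ'.get ⟨i, h'⟩).2

/-- `γ` is the low-optimal path of `Γ_z`: it is `ω`-optimal and below every
`ω`-optimal path of `Γ_z`. -/
def IsLowOptimal (ω : Site → ℝ) (z : Site) (γ : List Site) : Prop :=
  IsOptimal ω z γ ∧ ∀ γ' : List Site, IsOptimal ω z γ' → Below γ γ'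

open Classical in
/-- The low-optimal path `γ_z^ω` (an arbitrary default when it does not exist). -/
noncomputable def lowOpt (ω : Site → ℝ) (z : Site) : List Site :=
  if h : ∃ γ : List Site, IsLowOptimal ω z γ then h.choose else []

/-- The vertex set `V(T_z^ω) = {z' ∈ ℤ₊² : z ∈ γ_{z'}^ω}` of the subtree rooted at `z`. -/
def treeV (ω : Site → ℝ) (z : Site) : Set Site :=
  {z' : Site | z' ∈ posQuad ∧ z ∈ lowOpt ω z'}

lemma below_refl (γ : List Site) : Below γ γ := fun i h h' => le_refl _

lemma below_trans {a b c : List Site} (hab : Below a b) (hbc : Below b c)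
    (hl : a.length ≤ b.length) : Below a c := fun i h h' =>
  le_trans (hab i h (by omega)) (hbc i (by omega) h')

lemma below_pmin_left {γ γ' : List Site} : Below (pmin γ γ') γ := by
  intro i h h'
  simp only [List.get_eq_getElem, pmin, List.getElem_zipWith]
  split_ifs <;> omega

lemma below_pmin_right {γ γ' : List Site} : Below (pmin γ γ') γ' := by
  intro i h h'
  have hi' : i < γ'.length := by simp [pmin, List.length_zipWith] at h; omega
  simp only [List.get_eq_getElem, pmin, List.getElem_zipWith]
  split_ifs <;> omega

lemma pmin_optimal {ω : Site → ℝ} {z : Site} {γ γ' : List Site}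
    (h : IsOptimal ω z γ) (h' : IsOptimal ω z γ') : IsOptimal ω z (pmin γ γ') := by
  have hlen := paths_length_eq h.1 h'.1
  have hp := pmin_isPathTo h.1 h'.1
  have hq := pmax_isPathTo h.1 h'.1
  have hsum := plen_pmin_add_pmax ω γ γ' hlen
  have h1 := h.2 _ hq
  have h2 := h'.2 _ h.1
  refine ⟨hp, fun δ hδ => ?_⟩
  have h3 := h'.2 δ hδ
  linarith

lemma exists_lowOptimal (ω : Site → ℝ) {z : Site} (hz : z ∈ posQuad) :
    ∃ γ, IsLowOptimal ω z γ := by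
  have hOfin : {γ : List Site | IsOptimal ω z γ}.Finite :=
    (finite_paths z).subset (fun γ hγ => hγ.1)
  obtain ⟨γ0, hγ0⟩ := exists_optimal ω hz
  have claim : ∀ s : Finset (List Site), (∀ γ' ∈ s, IsOptimal ω z γ') →
      ∃ γ, IsOptimal ω z γ ∧ ∀ γ' ∈ s, Below γ γ' := by
    intro s
    induction s using Finset.induction_on with
    | empty => exact fun _ => ⟨γ0, hγ0, by simp⟩
    | @insert a s ha ih =>
      intro hall
      obtain ⟨γ, hγopt, hγbel⟩ := ih (fun γ' h' => hall γ' (Finset.mem_insert_of_mem h'))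
      have haopt := hall a (Finset.mem_insert_self a s)
      refine ⟨pmin γ a, pmin_optimal hγopt haopt, fun γ' h' => ?_⟩
      rcases Finset.mem_insert.1 h' with rfl | h'
      · exact below_pmin_right
      · exact below_trans below_pmin_left (hγbel γ' h')
          (by rw [pmin_length (paths_length_eq hγopt.1 haopt.1)])
  obtain ⟨γ, hopt, hbel⟩ := claim hOfin.toFinset (fun γ' h' => (hOfin.mem_toFinset.1 h'))
  exact ⟨γ, hopt, fun γ' h' => hbel γ' (hOfin.mem_toFinset.2 h')⟩

lemma isLowOptimal_unique {ω : Site → ℝ} {z : Site} {γ γ' : List Site}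
    (h : IsLowOptimal ω z γ) (h' : IsLowOptimal ω z γ') : γ = γ' := by
  apply path_eq h.1.1 h'.1.1
  intro i hi hi'
  have b1 := h.2 γ' h'.1 i hi hi'
  have b2 := h'.2 γ h.1 i hi' hi
  simp only [List.get_eq_getElem] at b1 b2
  omega

lemma lowOpt_unique {ω : Site → ℝ} {z : Site} {γ : List Site} (h : IsLowOptimal ω z γ) :
    lowOpt ω z = γ := by
  have hex : ∃ γ : List Site, IsLowOptimal ω z γ := ⟨γ, h⟩
  unfold lowOpt
  rw [dif_pos hex]
  exact isLowOptimal_unique hex.choose_spec h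

lemma lowOpt_spec (ω : Site → ℝ) {z : Site} (hz : z ∈ posQuad) :
    IsLowOptimal ω z (lowOpt ω z) := by
  have hex := exists_lowOptimal ω hz
  unfold lowOpt
  rw [dif_pos hex]
  exact hex.choose_spec
lemma path_take {z : Site} {γ : List Site} (h : IsPathTo z γ) {k : ℕ} (hk : k < γ.length) :
    IsPathTo γ[k] (γ.take (k + 1)) := by
  have hlen : (γ.take (k + 1)).length = k + 1 := by simp; omega
  refine ⟨?_, ?_, h.2.2.take _⟩
  · rw [List.head?_eq_getElem?, List.getElem?_take, if_pos (by omega : (0:ℕ) < k + 1)]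
    rw [List.getElem?_eq_getElem (by omega)]
    rw [path_zero h (by omega)]
  · rw [List.getLast?_eq_getElem?, hlen]
    simp only [Nat.add_sub_cancel]
    rw [List.getElem?_take, if_pos (by omega : k < k + 1), List.getElem?_eq_getElem hk]

lemma path_splice {z z' : Site} {γ δ : List Site} (hδ : IsPathTo z' δ) (hγ : IsPathTo z γ)
    {k : ℕ} (hk1 : k + 1 < γ.length) (hz' : γ[k] = z') :
    IsPathTo z (δ ++ γ.drop (k + 1)) := by
  have hdrop_ne : γ.drop (k + 1) ≠ [] := by
    apply List.ne_nil_of_length_pos; simp; omega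
  refine ⟨?_, ?_, ?_⟩
  · cases hδn : δ with
    | nil => exact absurd hδn (path_ne_nil hδ)
    | cons a l => rw [← hδn]; rw [List.head?_append]; rw [hδ.1]; rfl
  · rw [List.getLast?_append_of_ne_nil _ hdrop_ne]
    rw [List.getLast?_eq_getElem?, List.getElem?_drop]
    have e : k + 1 + ((γ.drop (k + 1)).length - 1) = γ.length - 1 := by simp; omega
    rw [e, List.getElem?_eq_getElem (by omega), path_last hγ]
  · refine List.IsChain.append hδ.2.2 (hγ.2.2.drop _) ?_
    intro x hx y hy
    rw [hδ.2.1] at hx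
    rw [List.head?_drop, List.getElem?_eq_getElem hk1] at hy
    simp only [Option.mem_def, Option.some_inj] at hx hy
    subst hx; subst hy
    rw [← hz']
    exact path_step hγ hk1

lemma lowOpt_take (ω : Site → ℝ) {z : Site} (hz : z ∈ posQuad) {k : ℕ}
    (hk : k < (lowOpt ω z).length) :
    lowOpt ω ((lowOpt ω z)[k]) = (lowOpt ω z).take (k + 1) := by
  have hlo := lowOpt_spec ω hz
  set γ := lowOpt ω z with hγdef
  have hpath : IsPathTo z γ := hlo.1.1
  by_cases hlast : k + 1 = γ.length
  · have h1 : γ[k] = z := by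
      have := path_last hpath
      have e : γ.length - 1 = k := by omega
      simp only [e] at this
      exact this
    rw [h1, List.take_of_length_le (by omega : γ.length ≤ k + 1)]
  · have hk1 : k + 1 < γ.length := by omega
    have hτ : IsPathTo γ[k] (γ.take (k + 1)) := path_take hpath hk
    have hτlen : (γ.take (k+1)).length = k + 1 := by simp; omega
    have hsplit : γ = γ.take (k+1) ++ γ.drop (k+1) := (List.take_append_drop _ _).symm
    have hplenγ : plen ω γ = plen ω (γ.take (k+1)) + plen ω (γ.drop (k+1)) := by
      conv_lhs => rw [hsplit]
      rw [plen_append]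
    have hopt : IsOptimal ω γ[k] (γ.take (k + 1)) := by
      refine ⟨hτ, fun δ hδ => ?_⟩
      have hχ := path_splice hδ hpath hk1 rfl
      have := hlo.1.2 _ hχ
      rw [plen_append] at this
      linarith
    apply lowOpt_unique
    refine ⟨hopt, fun δ hδopt => ?_⟩
    -- δ is an optimal path to γ[k]; show take is below δ
    have hμopt : IsOptimal ω γ[k] (pmin (γ.take (k+1)) δ) := pmin_optimal hopt hδopt
    have hμplen : plen ω (pmin (γ.take (k+1)) δ) = plen ω (γ.take (k+1)) :=
      le_antisymm (hopt.2 _ hμopt.1) (hμopt.2 _ hτ)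
    have hχ : IsPathTo z (pmin (γ.take (k+1)) δ ++ γ.drop (k+1)) :=
      path_splice hμopt.1 hpath hk1 rfl
    have hχopt : IsOptimal ω z (pmin (γ.take (k+1)) δ ++ γ.drop (k+1)) := by
      refine ⟨hχ, fun δ' hδ' => ?_⟩
      have := hlo.1.2 δ' hδ'
      rw [plen_append, hμplen]
      linarith
    have hbel : Below γ (pmin (γ.take (k+1)) δ ++ γ.drop (k+1)) := hlo.2 _ hχopt
    have hμlen : (pmin (γ.take (k+1)) δ).length = k + 1 := by
      rw [pmin_length (paths_length_eq hτ hδopt.1), hτlen]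
    intro i hi hi'
    have hik : i < k + 1 := by rw [hτlen] at hi; omega
    have hiγ : i < γ.length := by omega
    have hbi := hbel i hiγ (by rw [List.length_append, hμlen]; omega)
    simp only [List.get_eq_getElem] at hbi ⊢
    have e1 : (γ.take (k+1))[i]'hi = γ[i] := List.getElem_take
    have e2 : (pmin (γ.take (k+1)) δ ++ γ.drop (k+1))[i]'(by rw [List.length_append, hμlen]; omega)
        = (pmin (γ.take (k+1)) δ)[i]'(by omega) := List.getElem_append_left (by omega)
    rw [e2] at hbi
    simp only [pmin, List.getElem_zipWith] at hbi
    rw [e1]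
    rw [e1] at hbi  -- maybe the take-getElem occurs inside hbi
    split_ifs at hbi with hc
    · exact hc
    · exact hbi

lemma path_origin {γ : List Site} (h : IsPathTo ((0,0) : Site) γ) : γ = [((0,0) : Site)] := by
  have hl := path_length h
  simp only [Prod.fst, Prod.snd] at hl
  have : γ.length = 1 := by omega
  obtain ⟨a, rfl⟩ := List.length_eq_one_iff.1 this
  have h1 := h.1
  simp only [List.head?_cons, Option.some_inj] at h1
  rw [h1]

lemma lowOpt_origin (ω : Site → ℝ) : lowOpt ω ((0,0) : Site) = [((0,0) : Site)] := by
  apply lowOpt_unique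
  have hp : IsPathTo ((0,0) : Site) [((0,0) : Site)] := ⟨rfl, rfl, List.isChain_singleton _⟩
  refine ⟨⟨hp, fun δ hδ => by rw [path_origin hδ]⟩, fun δ hδ => ?_⟩
  rw [path_origin hδ.1]
  exact below_refl _
def Aset (ω : Site → ℝ) (n : ℕ) (w : Site) : Set Site :=
  {z' | z' ∈ treeV ω (1, 1) ∧ (lowOpt ω z')[n]? = some w}

noncomputable def nxt (ω : Site → ℝ) (n : ℕ) (w : Site) : Site :=
  open Classical in
  if (Aset ω (n + 1) (w + (1, 0)) ∩ Aset ω n w).Infinite then w + (1, 0) else w + (0, 1)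

noncomputable def fseq (ω : Site → ℝ) : ℕ → Site
  | 0 => ((0, 0) : Site)
  | n + 1 => nxt ω n (fseq ω n)

lemma treeV_mem {ω : Site → ℝ} {z' : Site} (h : z' ∈ treeV ω (1, 1)) :
    z' ∈ posQuad ∧ IsPathTo z' (lowOpt ω z') ∧ (lowOpt ω z')[2]? = some ((1, 1) : Site) := by
  obtain ⟨hq, hmem⟩ := h
  have hp : IsPathTo z' (lowOpt ω z') := (lowOpt_spec ω hq).1.1
  refine ⟨hq, hp, ?_⟩
  obtain ⟨i, hi, hEq⟩ := List.mem_iff_getElem.1 hmem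
  have hc := (path_coords hp i hi).1
  rw [hEq] at hc
  have : i = 2 := by
    simp only [Prod.fst, Prod.snd] at hc
    omega
  subst this
  rw [List.getElem?_eq_getElem hi, hEq]

lemma Aset_mem_facts {ω : Site → ℝ} {n : ℕ} {w z' : Site} (h : z' ∈ Aset ω n w) :
    z' ∈ posQuad ∧ IsPathTo z' (lowOpt ω z') ∧
      ∃ hn : n < (lowOpt ω z').length, (lowOpt ω z')[n] = w := by
  obtain ⟨ht, hn⟩ := h
  obtain ⟨hq, hp, _⟩ := treeV_mem ht
  rw [List.getElem?_eq_some_iff] at hn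
  exact ⟨hq, hp, hn⟩

lemma Aset_split {ω : Site → ℝ} (n : ℕ) (w : Site) (h : (Aset ω n w).Infinite) :
    (Aset ω (n + 1) (nxt ω n w) ∩ Aset ω n w).Infinite := by
  have hF : {v : Site | 0 ≤ v.1 ∧ 0 ≤ v.2 ∧ v.1 + v.2 ≤ (n : ℤ)}.Finite := by
    apply Set.Finite.subset (((Set.finite_Icc (0:ℤ) (n:ℤ)).prod (Set.finite_Icc (0:ℤ) (n:ℤ))))
    rintro v ⟨h1, h2, h3⟩
    exact ⟨⟨h1, by omega⟩, ⟨h2, by omega⟩⟩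
  have hsub : Aset ω n w \ {v : Site | 0 ≤ v.1 ∧ 0 ≤ v.2 ∧ v.1 + v.2 ≤ (n : ℤ)} ⊆
      (Aset ω (n + 1) (w + (1, 0)) ∩ Aset ω n w) ∪
      (Aset ω (n + 1) (w + (0, 1)) ∩ Aset ω n w) := by
    rintro z' ⟨hA, hnF⟩
    obtain ⟨hq, hp, hlt, he⟩ := Aset_mem_facts hA
    have hlenz := path_length hp
    have hsum : (n : ℤ) < z'.1 + z'.2 := by
      by_contra hcon
      exact hnF ⟨hq.1, hq.2, by omega⟩
    have hlt1 : n + 1 < (lowOpt ω z').length := by omega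
    have hstep := path_step hp hlt1
    rw [he] at hstep
    have hmem : (lowOpt ω z')[n+1]? = some ((lowOpt ω z')[n+1]) :=
      List.getElem?_eq_getElem hlt1
    rcases hstep with h1 | h1
    · left; exact ⟨⟨hA.1, by rw [hmem, h1]⟩, hA⟩
    · right; exact ⟨⟨hA.1, by rw [hmem, h1]⟩, hA⟩
  have hinf2 := (h.diff hF).mono hsub
  rcases (Set.infinite_union.1 hinf2) with h1 | h1
  · unfold nxt
    rw [if_pos h1]
    exact h1
  · unfold nxt
    split_ifs with h2
    · exact h2
    · exact h1

lemma fseq_inv {ω : Site → ℝ} (hinf : (treeV ω (1, 1)).Infinite) :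
    ∀ n, (Aset ω n (fseq ω n)).Infinite := by
  intro n
  induction n with
  | zero =>
    apply hinf.mono
    intro z' hz'
    obtain ⟨hq, hp, _⟩ := treeV_mem hz'
    refine ⟨hz', ?_⟩
    show (lowOpt ω z')[0]? = some ((0, 0) : Site)
    rw [← List.head?_eq_getElem?]
    exact hp.1
  | succ n ih =>
    exact ((Aset_split n _ ih).mono Set.inter_subset_left)

lemma fseq_step (ω : Site → ℝ) (n : ℕ) : IsStep (fseq ω n) (fseq ω (n + 1)) := by
  show IsStep (fseq ω n) (nxt ω n (fseq ω n))
  unfold nxt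
  split_ifs
  · exact Or.inl rfl
  · exact Or.inr rfl

lemma fseq_lowOpt {ω : Site → ℝ} (hinf : (treeV ω (1, 1)).Infinite) :
    ∀ n, lowOpt ω (fseq ω n) = (List.range (n + 1)).map (fseq ω) := by
  intro n
  induction n with
  | zero =>
    show lowOpt ω ((0,0) : Site) = _
    rw [lowOpt_origin]
    rfl
  | succ n ih =>
    obtain ⟨z', hz'⟩ := (Aset_split n _ (fseq_inv hinf n)).nonempty
    obtain ⟨hA1, hA2⟩ := hz'
    obtain ⟨hq, hp, hlt1, he1⟩ := Aset_mem_facts hA1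
    obtain ⟨_, _, hlt2, he2⟩ := Aset_mem_facts hA2
    have ht1 := lowOpt_take ω hq hlt1
    rw [he1] at ht1
    have ht2 := lowOpt_take ω hq hlt2
    rw [he2] at ht2
    rw [show fseq ω (n + 1) = nxt ω n (fseq ω n) from rfl, ht1, List.take_succ, ← ht2, ih,
      List.getElem?_eq_getElem hlt1, he1]
    rw [List.range_succ (n := n + 1), List.map_append]
    rfl

lemma fseq_two {ω : Site → ℝ} (hinf : (treeV ω (1, 1)).Infinite) :
    fseq ω 2 = ((1, 1) : Site) := by
  obtain ⟨z', ht, h2⟩ := (fseq_inv hinf 2).nonempty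
  obtain ⟨_, _, h11⟩ := treeV_mem ht
  exact Option.some_inj.1 (h2.symm.trans h11)

/-- If `V(T_{(1,1)}^ω)` is infinite, then `T_{(1,1)}^ω` contains an infinite
low-optimal path, which is non trivial. -/
theorem infinite_tree_infinite_path (ω : Site → ℝ) (hω : ∀ z : Site, 0 ≤ ω z)
    (hinf : (treeV ω (1, 1)).Infinite) :
    ∃ f : ℕ → Site, f 0 = (0, 0) ∧ (∀ n : ℕ, IsStep (f n) (f (n + 1))) ∧
      (∃ n : ℕ, f n = (1, 1)) ∧
      (∀ n : ℕ, lowOpt ω (f n) = (List.range (n + 1)).map f) ∧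
      (∃ n : ℕ, f n ≠ ((n : ℤ), 0)) ∧ (∃ n : ℕ, f n ≠ (0, (n : ℤ))) := by
  refine ⟨fseq ω, rfl, fseq_step ω, ⟨2, fseq_two hinf⟩, fseq_lowOpt hinf, ⟨2, ?_⟩, ⟨2, ?_⟩⟩ <;>
    rw [fseq_two hinf] <;> simp [Prod.ext_iff]
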